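/- Let A > 0 and B ≥ 0, not both zero, and let (x, y) solve x'(s) = x(s)y(s) + A, y'(s) = -x(s)^2 - B on ℝ. Define θ(s) = ∫₀^s x(s') ds' and X(s) = e^{iθ(s)}(x(s) + i y(s))/(A - iB). Then |X(s)|·X'(s)/X(s) → (B + iA)/√(A² + B²) as s → +∞ and |X(s)|·X'(s)/X(s) → -(B + iA)/√(A² + B²) as s → -∞. -/

import Mathlib

open Filter

open intervalIntegral

lemma lemA (A B : ℝ) (hA : 0 < A) (hB : 0 ≤ B) (x y : ℝ → ℝ)
    (hx : ∀ s, HasDerivAt x (x s * y s + A) s)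
    (hy : ∀ s, HasDerivAt y (-(x s) ^ 2 - B) s) :
    Tendsto y atTop atBot := by
  have dx : Differentiable ℝ x := fun s => (hx s).differentiableAt
  have dy : Differentiable ℝ y := fun s => (hy s).differentiableAt
  have cx : Continuous x := dx.continuous
  have cy : Continuous y := dy.continuous
  have hanti : Antitone y := by
    apply antitone_of_deriv_nonpos dy
    intro s
    rw [(hy s).deriv]
    nlinarith [sq_nonneg (x s)]
  rw [tendsto_atBot]
  intro b
  by_contra hcon
  have hlow : ∀ s, b < y s := by
    intro s
    by_contra hs
    push_neg at hs
    exact hcon (Filter.eventually_atTop.2 ⟨s, fun s' hs' => (hanti hs').trans hs⟩)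
  have hyint : ∀ T, (∫ t in (0:ℝ)..T, (-(x t) ^ 2 - B)) = y T - y 0 := by
    intro T
    exact integral_eq_sub_of_hasDerivAt (fun t _ => hy t)
      (Continuous.intervalIntegrable (by fun_prop) _ _)
  set C : ℝ := y 0 - b with hCdef
  have hxsqint : ∀ T, 0 ≤ T → (∫ t in (0:ℝ)..T, (x t) ^ 2) ≤ C := by
    intro T hT
    have h1 : (∫ t in (0:ℝ)..T, (x t) ^ 2) ≤ ∫ t in (0:ℝ)..T, ((x t) ^ 2 + B) := by
      apply integral_mono_on hT
      · exact Continuous.intervalIntegrable (by fun_prop) _ _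
      · exact Continuous.intervalIntegrable (by fun_prop) _ _
      · intro t _; linarith
    have h3 : (∫ t in (0:ℝ)..T, ((x t) ^ 2 + B)) = -∫ t in (0:ℝ)..T, (-(x t) ^ 2 - B) := by
      rw [← intervalIntegral.integral_neg]
      congr 1; funext t; ring
    rw [h3, hyint T] at h1
    have := hlow T
    linarith
  set M : ℝ := max |y 0| |b| with hMdef
  have hM : 0 ≤ M := le_trans (abs_nonneg _) (le_max_left _ _)
  have hyb : ∀ s, 0 ≤ s → |y s| ≤ M := by
    intro s hs
    rw [abs_le]
    refine ⟨?_, ?_⟩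
    · have h1 : |b| ≤ M := le_max_right _ _
      linarith [neg_abs_le b, hlow s]
    · have h1 : |y 0| ≤ M := le_max_left _ _
      linarith [le_abs_self (y 0), hanti hs]
  set c1 : ℝ := M ^ 2 / (2 * A) with hc1def
  have hc1 : 0 ≤ c1 := by positivity
  have hpt : ∀ s, 0 ≤ s → A / 2 - c1 * (x s) ^ 2 ≤ x s * y s + A := by
    intro s hs
    have h1 := abs_le.mp (hyb s hs)
    have hy2 : (y s) ^ 2 ≤ M ^ 2 := by nlinarith [h1.1, h1.2]
    have key : 0 ≤ M ^ 2 * (x s) ^ 2 + 2 * A * (x s * y s) + A ^ 2 := by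
      nlinarith [sq_nonneg (x s * y s + A), mul_nonneg (sq_nonneg (x s)) (sub_nonneg.2 hy2)]
    have h2A : (0:ℝ) < 2 * A := by linarith
    have h5 : (-(2*A*(x s*y s)) - A^2) ≤ M^2 * x s^2 := by linarith [key]
    have h6 : (-(2*A*(x s*y s)) - A^2)/(2*A) ≤ M^2 * x s^2 / (2*A) :=
      (div_le_div_iff_of_pos_right h2A).mpr h5
    have h7 : (-(2*A*(x s*y s)) - A^2)/(2*A) = -(x s*y s) - A/2 := by field_simp
    rw [hc1def, div_mul_eq_mul_div]
    linarith [h6]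
  have hxgrow : ∀ T, 0 ≤ T → x 0 + (A / 2 * T - c1 * C) ≤ x T := by
    intro T hT
    have hxint : (∫ t in (0:ℝ)..T, (x t * y t + A)) = x T - x 0 :=
      integral_eq_sub_of_hasDerivAt (fun t _ => hx t)
        (Continuous.intervalIntegrable (by fun_prop) _ _)
    have h1 : (∫ t in (0:ℝ)..T, (A / 2 - c1 * (x t) ^ 2)) ≤ ∫ t in (0:ℝ)..T, (x t * y t + A) := by
      apply integral_mono_on hT
      · exact Continuous.intervalIntegrable (by fun_prop) _ _
      · exact Continuous.intervalIntegrable (by fun_prop) _ _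
      · intro t ht; exact hpt t ht.1
    have h2 : (∫ t in (0:ℝ)..T, (A / 2 - c1 * (x t) ^ 2))
        = A / 2 * T - c1 * ∫ t in (0:ℝ)..T, (x t) ^ 2 := by
      rw [intervalIntegral.integral_sub (Continuous.intervalIntegrable (by fun_prop) _ _)
        (Continuous.intervalIntegrable (by fun_prop) _ _),
        intervalIntegral.integral_const, intervalIntegral.integral_const_mul]
      simp [mul_comm]
    have h4 := hxsqint T hT
    rw [h2, hxint] at h1
    nlinarith [mul_le_mul_of_nonneg_left h4 hc1]
  -- choose large T
  set T₁ : ℝ := max 0 ((2 / A) * (1 + c1 * C - x 0)) with hT1def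
  have hT₁0 : 0 ≤ T₁ := le_max_left _ _
  have hxge1 : ∀ T, T₁ ≤ T → 1 ≤ x T := by
    intro T hT
    have h0 : 0 ≤ T := le_trans hT₁0 hT
    have h1 := hxgrow T h0
    have h2 : (2 / A) * (1 + c1 * C - x 0) ≤ T := le_trans (le_max_right _ _) hT
    have h3 : 1 + c1 * C - x 0 ≤ A / 2 * T := by
      have h4 := mul_le_mul_of_nonneg_left h2 (le_of_lt (half_pos hA))
      have heq : A/2 * (2/A * (1 + c1*C - x 0)) = 1 + c1*C - x 0 := by
        field_simp
      linarith [h4]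
    linarith
  have hC0 : 0 ≤ C := by
    have := hxsqint 0 le_rfl
    simpa using le_trans (by simp) this
  set T₂ : ℝ := T₁ + C + 1 with hT2def
  have hT₂ : T₁ ≤ T₂ := by linarith
  have hsplit : (∫ t in (0:ℝ)..T₂, (x t) ^ 2)
      = (∫ t in (0:ℝ)..T₁, (x t) ^ 2) + ∫ t in T₁..T₂, (x t) ^ 2 := by
    rw [intervalIntegral.integral_add_adjacent_intervals
      (Continuous.intervalIntegrable (by fun_prop) _ _)
      (Continuous.intervalIntegrable (by fun_prop) _ _)]
  have h5 : (C : ℝ) + 1 ≤ ∫ t in T₁..T₂, (x t) ^ 2 := by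
    have h6 : (∫ t in T₁..T₂, (1:ℝ)) ≤ ∫ t in T₁..T₂, (x t) ^ 2 := by
      apply integral_mono_on hT₂
      · exact intervalIntegrable_const
      · exact Continuous.intervalIntegrable (by fun_prop) _ _
      · intro t ht; nlinarith [hxge1 t ht.1]
    rw [intervalIntegral.integral_const] at h6
    simp only [smul_eq_mul, mul_one, hT2def] at h6
    linarith
  have h7 : 0 ≤ ∫ t in (0:ℝ)..T₁, (x t) ^ 2 :=
    intervalIntegral.integral_nonneg hT₁0 (fun t _ => sq_nonneg _)
  have h8 := hxsqint T₂ (by linarith)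
  rw [hsplit] at h8
  linarith


lemma lemB (A : ℝ) (hA : 0 < A) (x y : ℝ → ℝ)
    (hx : ∀ s, HasDerivAt x (x s * y s + A) s)
    (cy : Continuous y)
    (hyTop : Tendsto y atTop atBot) :
    Tendsto x atTop (nhds 0) := by
  have dx : Differentiable ℝ x := fun s => (hx s).differentiableAt
  have cx : Continuous x := dx.continuous
  rw [Metric.tendsto_atTop]
  intro ε hε
  set e := ε/2 with hedef
  have he : 0 < e := by positivity
  obtain ⟨s₀, hs₀⟩ := eventually_atTop.mp (hyTop.eventually_le_atBot (-((A+1)/e)))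
  have hyneg : ∀ s, s₀ ≤ s → y s ≤ 0 := by
    intro s hs
    have h1 := hs₀ s hs
    have h2 : 0 < (A+1)/e := by positivity
    linarith
  have hd1 : ∀ s, s₀ ≤ s → e ≤ x s → x s * y s + A ≤ -1 := by
    intro s hs hxe
    have hy1 : y s ≤ -((A+1)/e) := hs₀ s hs
    have h1 : x s * y s ≤ e * y s := mul_le_mul_of_nonpos_right hxe (hyneg s hs)
    have h2 : e * y s ≤ e * (-((A+1)/e)) := mul_le_mul_of_nonneg_left hy1 he.le
    have h3 : e * (-((A+1)/e)) = -(A+1) := by field_simp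
    linarith
  have hd2 : ∀ s, s₀ ≤ s → x s ≤ -e → 1 ≤ x s * y s + A := by
    intro s hs hxe
    have hy1 : y s ≤ -((A+1)/e) := hs₀ s hs
    have h1 : (-e) * y s ≤ x s * y s := mul_le_mul_of_nonpos_right hxe (hyneg s hs)
    have h2 : (-e) * (-((A+1)/e)) ≤ (-e) * y s :=
      mul_le_mul_of_nonpos_left hy1 (by linarith)
    have h3 : (-e) * (-((A+1)/e)) = A+1 := by field_simp
    linarith
  have hxint : ∀ a b : ℝ, (∫ t in a..b, (x t * y t + A)) = x b - x a := fun a b =>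
    integral_eq_sub_of_hasDerivAt (fun t _ => hx t)
      (Continuous.intervalIntegrable (by fun_prop) _ _)
  have hentry : ∃ s₁, s₀ ≤ s₁ ∧ |x s₁| ≤ e := by
    by_contra hcon
    push_neg at hcon
    have habs : ∀ s, s₀ ≤ s → e < x s ∨ x s < -e := by
      intro s hs
      rcases lt_abs.mp (hcon s hs) with h | h
      · exact Or.inl h
      · exact Or.inr (by linarith)
    have hall : (∀ s, s₀ ≤ s → e < x s) ∨ (∀ s, s₀ ≤ s → x s < -e) := by
      rcases habs s₀ le_rfl with h0 | h0
      · left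
        intro s hs
        rcases habs s hs with h | h
        · exact h
        · exfalso
          have hmem : (0:ℝ) ∈ Set.Icc (x s) (x s₀) := ⟨by linarith, by linarith⟩
          obtain ⟨c, hc1, hc2⟩ := intermediate_value_Icc' hs cx.continuousOn hmem
          rcases habs c hc1.1 with h' | h' <;> rw [hc2] at h' <;> linarith
      · right
        intro s hs
        rcases habs s hs with h | h
        · exfalso
          have hmem : (0:ℝ) ∈ Set.Icc (x s₀) (x s) := ⟨by linarith, by linarith⟩
          obtain ⟨c, hc1, hc2⟩ := intermediate_value_Icc hs cx.continuousOn hmem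
          rcases habs c hc1.1 with h' | h' <;> rw [hc2] at h' <;> linarith
        · exact h
    rcases hall with hall | hall
    · set T := s₀ + x s₀ with hT
      have hTs : s₀ ≤ T := by linarith [hall s₀ le_rfl, he]
      have h1 : (∫ t in s₀..T, (x t * y t + A)) ≤ ∫ t in s₀..T, (-1:ℝ) := by
        apply integral_mono_on hTs
          (Continuous.intervalIntegrable (by fun_prop) _ _) intervalIntegrable_const
        intro t ht
        exact hd1 t ht.1 (le_of_lt (hall t ht.1))
      rw [hxint s₀ T, intervalIntegral.integral_const] at h1
      simp only [smul_eq_mul, mul_neg, mul_one] at h1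
      have h2 := hall T hTs
      have h3 : T - s₀ = x s₀ := by rw [hT]; ring
      rw [h3] at h1
      linarith
    · set T := s₀ - x s₀ with hT
      have hTs : s₀ ≤ T := by
        have := hall s₀ le_rfl
        simp only [hT]
        linarith
      have h1 : (∫ t in s₀..T, (1:ℝ)) ≤ ∫ t in s₀..T, (x t * y t + A) := by
        apply integral_mono_on hTs
          intervalIntegrable_const (Continuous.intervalIntegrable (by fun_prop) _ _)
        intro t ht
        exact hd2 t ht.1 (le_of_lt (hall t ht.1))
      rw [hxint s₀ T, intervalIntegral.integral_const] at h1
      simp only [smul_eq_mul, mul_one] at h1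
      have h2 := hall T hTs
      have h3 : T - s₀ = -(x s₀) := by rw [hT]; ring
      rw [h3] at h1
      linarith
  obtain ⟨s₁, hs₁0, hs₁⟩ := hentry
  have hinv : ∀ s₂, s₁ ≤ s₂ → |x s₂| ≤ e := by
    intro s₂ h12
    by_contra hcon
    push_neg at hcon
    rcases lt_abs.mp hcon with hgt | hgt
    · set S := Set.Icc s₁ s₂ ∩ x ⁻¹' (Set.Iic e) with hS
      have hScomp : IsCompact S := isCompact_Icc.inter_right (isClosed_Iic.preimage cx)
      have hSne : S.Nonempty := ⟨s₁, ⟨le_rfl, h12⟩, le_trans (le_abs_self _) hs₁⟩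
      have hsup := hScomp.sSup_mem hSne
      set m := sSup S with hm
      obtain ⟨⟨hm1, hm2⟩, hm3⟩ := hsup
      simp only [Set.mem_preimage, Set.mem_Iic] at hm3
      have hms₂ : m < s₂ := by
        rcases lt_or_eq_of_le hm2 with h | h
        · exact h
        · exfalso; rw [h] at hm3; linarith
      have hgt' : ∀ t ∈ Set.Ioo m s₂, e < x t := by
        intro t ht
        by_contra hle
        push_neg at hle
        have htS : t ∈ S := ⟨⟨le_trans hm1 ht.1.le, ht.2.le⟩, hle⟩
        exact absurd (le_csSup hScomp.bddAbove htS) (not_le.mpr ht.1)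
      have hanti2 : StrictAntiOn x (Set.Icc m s₂) := by
        apply strictAntiOn_of_deriv_neg (convex_Icc _ _) cx.continuousOn
        intro t ht
        rw [interior_Icc] at ht
        rw [(hx t).deriv]
        have h1 := hd1 t (le_trans (le_trans hs₁0 hm1) ht.1.le) (le_of_lt (hgt' t ht))
        linarith
      have := hanti2 (Set.left_mem_Icc.mpr hms₂.le) (Set.right_mem_Icc.mpr hms₂.le) hms₂
      linarith
    · set S := Set.Icc s₁ s₂ ∩ x ⁻¹' (Set.Ici (-e)) with hS
      have hScomp : IsCompact S := isCompact_Icc.inter_right (isClosed_Ici.preimage cx)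
      have hSne : S.Nonempty := ⟨s₁, ⟨le_rfl, h12⟩, by
        have := neg_abs_le (x s₁); simp only [Set.mem_preimage, Set.mem_Ici]; linarith⟩
      have hsup := hScomp.sSup_mem hSne
      set m := sSup S with hm
      obtain ⟨⟨hm1, hm2⟩, hm3⟩ := hsup
      simp only [Set.mem_preimage, Set.mem_Ici] at hm3
      have hms₂ : m < s₂ := by
        rcases lt_or_eq_of_le hm2 with h | h
        · exact h
        · exfalso; rw [h] at hm3; linarith
      have hgt' : ∀ t ∈ Set.Ioo m s₂, x t < -e := by
        intro t ht
        by_contra hle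
        push_neg at hle
        have htS : t ∈ S := ⟨⟨le_trans hm1 ht.1.le, ht.2.le⟩, hle⟩
        exact absurd (le_csSup hScomp.bddAbove htS) (not_le.mpr ht.1)
      have hmono2 : StrictMonoOn x (Set.Icc m s₂) := by
        apply strictMonoOn_of_deriv_pos (convex_Icc _ _) cx.continuousOn
        intro t ht
        rw [interior_Icc] at ht
        rw [(hx t).deriv]
        have h1 := hd2 t (le_trans (le_trans hs₁0 hm1) ht.1.le) (le_of_lt (hgt' t ht))
        linarith
      have := hmono2 (Set.left_mem_Icc.mpr hms₂.le) (Set.right_mem_Icc.mpr hms₂.le) hms₂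
      linarith
  refine ⟨s₁, fun s hs => ?_⟩
  rw [Real.dist_eq, sub_zero]
  calc |x s| ≤ e := hinv s hs
    _ < ε := by rw [hedef]; linarith


lemma lemD (A B : ℝ) (hA : 0 < A) (x y : ℝ → ℝ)
    (hx : ∀ s, HasDerivAt x (x s * y s + A) s)
    (hy : ∀ s, HasDerivAt y (-(x s) ^ 2 - B) s)
    (θ : ℝ → ℝ) (hθ : ∀ s, θ s = ∫ t in (0:ℝ)..s, x t)
    (X : ℝ → ℂ)
    (hX : ∀ s, X s = Complex.exp (Complex.I * (θ s : ℂ)) *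
      ((x s : ℂ) + Complex.I * (y s : ℂ)) / ((A : ℂ) - Complex.I * (B : ℂ))) :
    ∀ s, HasDerivAt X (Complex.exp (Complex.I * (θ s : ℂ))) s := by
  have dx : Differentiable ℝ x := fun s => (hx s).differentiableAt
  have cx : Continuous x := dx.continuous
  have hden : ((A:ℂ) - Complex.I * B) ≠ 0 := by
    intro h
    have h2 := congrArg Complex.re h
    simp at h2
    exact hA.ne' h2
  intro s
  have hθd : HasDerivAt θ (x s) s := by
    have h1 : HasDerivAt (fun u => ∫ t in (0:ℝ)..u, x t) (x s) s :=
      intervalIntegral.integral_hasDerivAt_right (cx.intervalIntegrable _ _)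
        (cx.stronglyMeasurableAtFilter _ _) cx.continuousAt
    have : θ = fun u => ∫ t in (0:ℝ)..u, x t := funext hθ
    rw [this]
    exact h1
  have h1 : HasDerivAt (fun u => ((θ u : ℂ))) ((x s : ℂ)) s := hθd.ofReal_comp
  have h2 : HasDerivAt (fun u => Complex.I * (θ u : ℂ)) (Complex.I * (x s : ℂ)) s :=
    h1.const_mul Complex.I
  have h3 : HasDerivAt (fun u => Complex.exp (Complex.I * (θ u : ℂ)))
      (Complex.exp (Complex.I * (θ s : ℂ)) * (Complex.I * (x s : ℂ))) s := h2.cexp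
  have h4 : HasDerivAt (fun u => ((x u : ℂ))) ((x s * y s + A : ℝ) : ℂ) s := (hx s).ofReal_comp
  have h5 : HasDerivAt (fun u => Complex.I * (y u : ℂ))
      (Complex.I * ((-(x s) ^ 2 - B : ℝ) : ℂ)) s := (hy s).ofReal_comp.const_mul Complex.I
  have h6 := h4.add h5
  have h7 := h3.mul h6
  have h8 := h7.div_const ((A : ℂ) - Complex.I * B)
  have hXfun : X = fun u => Complex.exp (Complex.I * (θ u : ℂ)) *
      ((x u : ℂ) + Complex.I * (y u : ℂ)) / ((A : ℂ) - Complex.I * (B : ℂ)) := funext hX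
  rw [hXfun]
  refine h8.congr_deriv ?_
  symm
  rw [eq_div_iff hden]
  simp only [Pi.add_apply]
  push_cast
  linear_combination -(Complex.exp (Complex.I * (θ s : ℂ)) * (x s : ℂ) * (y s : ℂ)) * Complex.I_sq

lemma master (A B : ℝ) (hA : 0 < A) (hB : 0 ≤ B) (x y : ℝ → ℝ)
    (hx : ∀ s, HasDerivAt x (x s * y s + A) s)
    (hy : ∀ s, HasDerivAt y (-(x s) ^ 2 - B) s)
    (θ : ℝ → ℝ) (hθ : ∀ s, θ s = ∫ t in (0:ℝ)..s, x t)
    (X : ℝ → ℂ)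
    (hX : ∀ s, X s = Complex.exp (Complex.I * (θ s : ℂ)) *
      ((x s : ℂ) + Complex.I * (y s : ℂ)) / ((A : ℂ) - Complex.I * (B : ℂ))) :
    Tendsto (fun s => (‖X s‖ : ℂ) * deriv X s / X s) atTop
      (nhds (((B : ℂ) + Complex.I * (A : ℂ)) / (Real.sqrt (A ^ 2 + B ^ 2) : ℂ))) := by
  have dy : Differentiable ℝ y := fun s => (hy s).differentiableAt
  have hyTop : Tendsto y atTop atBot := lemA A B hA hB x y hx hy
  have hx0 : Tendsto x atTop (nhds 0) := lemB A hA x y hx dy.continuous hyTop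
  have hXd := lemD A B hA x y hx hy θ hθ X hX
  have hS : (0:ℝ) < A ^ 2 + B ^ 2 := by positivity
  have hsqrt : Real.sqrt (A ^ 2 + B ^ 2) ≠ 0 := by positivity
  have hsqrtC : ((Real.sqrt (A ^ 2 + B ^ 2) : ℝ) : ℂ) ≠ 0 := by
    exact_mod_cast hsqrt
  have hden : ((A:ℂ) - Complex.I * B) ≠ 0 := by
    intro h
    have h2 := congrArg Complex.re h
    simp at h2
    exact hA.ne' h2
  set g : ℝ → ℂ := fun w => -(((A:ℂ) - Complex.I * B) * ((Real.sqrt (w ^ 2 + 1) : ℝ) : ℂ)) /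
      (((Real.sqrt (A ^ 2 + B ^ 2) : ℝ) : ℂ) * ((w : ℂ) + Complex.I)) with hgdef
  -- w → 0
  have hyinv : Tendsto (fun s => (y s)⁻¹) atTop (nhds 0) := by
    have h1 : Tendsto (fun s => -(y s)) atTop atTop := tendsto_neg_atBot_atTop.comp hyTop
    have h2 : Tendsto (fun s => (-(y s))⁻¹) atTop (nhds 0) := h1.inv_tendsto_atTop
    have h3 : Tendsto (fun s => -(-(y s))⁻¹) atTop (nhds (-0)) := h2.neg
    simp only [inv_neg, neg_neg, neg_zero] at h3
    exact h3
  have hw : Tendsto (fun s => x s / y s) atTop (nhds 0) := by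
    have := hx0.mul hyinv
    simp only [zero_mul] at this
    exact this.congr (fun s => (div_eq_mul_inv _ _).symm)
  -- continuity of g at 0
  have hgc : ContinuousAt g 0 := by
    apply ContinuousAt.div
    · fun_prop
    · fun_prop
    · simp [hsqrtC, Complex.I_ne_zero]
  have hcomp : Tendsto (fun s => g (x s / y s)) atTop (nhds (g 0)) := hgc.tendsto.comp hw
  -- value of g at 0
  have hg0 : g 0 = ((B : ℂ) + Complex.I * (A : ℂ)) / ((Real.sqrt (A ^ 2 + B ^ 2) : ℝ) : ℂ) := by
    rw [hgdef]
    simp only [ne_eq, OfNat.ofNat_ne_zero, not_false_eq_true, zero_pow, zero_add,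
      Real.sqrt_one, Complex.ofReal_one, mul_one, Complex.ofReal_zero]
    rw [div_eq_div_iff (by simp [hsqrtC, Complex.I_ne_zero]) hsqrtC]
    linear_combination (-(((Real.sqrt (A^2+B^2) : ℝ) : ℂ) * (A : ℂ))) * Complex.I_sq
  -- eventual equality
  have hyev : ∀ᶠ s in atTop, y s < 0 := hyTop.eventually (eventually_lt_atBot 0)
  have heq : (fun s => (‖X s‖ : ℂ) * deriv X s / X s) =ᶠ[atTop] (fun s => g (x s / y s)) := by
    filter_upwards [hyev] with s hys
    have hyne : y s ≠ 0 := hys.ne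
    have hyneC : ((y s : ℝ) : ℂ) ≠ 0 := by exact_mod_cast hyne
    set w : ℝ := x s / y s with hwdef
    have hd : deriv X s = Complex.exp (Complex.I * (θ s : ℂ)) := (hXd s).deriv
    have hexpne : Complex.exp (Complex.I * (θ s : ℂ)) ≠ 0 := Complex.exp_ne_zero _
    have hwI : ((w : ℝ) : ℂ) + Complex.I ≠ 0 := by
      intro h
      have := congrArg Complex.im h
      simp at this
    -- complex decomposition
    have hxy : ((x s : ℝ) : ℂ) + Complex.I * ((y s : ℝ) : ℂ)
        = ((y s : ℝ) : ℂ) * ((w : ℂ) + Complex.I) := by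
      rw [hwdef]
      push_cast
      field_simp
    -- norm computation
    have hsq2 : (x s) ^ 2 + (y s) ^ 2 = (y s) ^ 2 * (w ^ 2 + 1) := by
      rw [hwdef]; field_simp
    have hnorm : ‖X s‖ = (-(y s)) * Real.sqrt (w ^ 2 + 1) / Real.sqrt (A ^ 2 + B ^ 2) := by
      rw [hX s, norm_div, norm_mul]
      have e1 : ‖Complex.exp (Complex.I * (θ s : ℂ))‖ = 1 := by
        rw [Complex.norm_exp]
        simp
      have e2 : ‖((x s : ℝ) : ℂ) + Complex.I * ((y s : ℝ) : ℂ)‖ = Real.sqrt ((x s)^2 + (y s)^2) := by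
        rw [show ((x s : ℝ) : ℂ) + Complex.I * ((y s : ℝ) : ℂ)
          = (x s : ℂ) + (y s : ℂ) * Complex.I by ring, Complex.norm_add_mul_I]
      have e3 : ‖((A : ℝ) : ℂ) - Complex.I * ((B : ℝ) : ℂ)‖ = Real.sqrt (A^2 + B^2) := by
        rw [show ((A : ℝ) : ℂ) - Complex.I * ((B : ℝ) : ℂ)
          = (A : ℂ) + (-B : ℝ) * Complex.I by push_cast; ring, Complex.norm_add_mul_I]
        norm_num
      rw [e1, e2, e3, one_mul, hsq2, Real.sqrt_mul (sq_nonneg _), Real.sqrt_sq_eq_abs,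
        abs_of_neg hys]
    -- final identity
    rw [hd, hnorm, hX s, hxy, hgdef]
    push_cast
    field_simp
  exact (Tendsto.congr' heq.symm (hg0 ▸ hcomp))

/-- If `A > 0`, `B ≥ 0` (not both zero) and `(x, y)` solves
`x' = xy + A`, `y' = -x² - B` on `ℝ`, with `θ(s) = ∫₀^s x` and
`X(s) = e^{iθ(s)}(x(s) + iy(s))/(A - iB)`, then
`|X|·X'/X → (B + iA)/√(A² + B²)` as `s → +∞` and
`|X|·X'/X → -(B + iA)/√(A² + B²)` as `s → -∞`. -/
theorem stmt_11 (A B : ℝ) (hA : 0 < A) (hB : 0 ≤ B) (x y : ℝ → ℝ)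
    (hx : ∀ s, HasDerivAt x (x s * y s + A) s)
    (hy : ∀ s, HasDerivAt y (-(x s) ^ 2 - B) s)
    (θ : ℝ → ℝ) (hθ : ∀ s, θ s = ∫ t in (0:ℝ)..s, x t)
    (X : ℝ → ℂ)
    (hX : ∀ s, X s = Complex.exp (Complex.I * (θ s : ℂ)) *
      ((x s : ℂ) + Complex.I * (y s : ℂ)) / ((A : ℂ) - Complex.I * (B : ℂ))) :
    Tendsto (fun s => (‖X s‖ : ℂ) * deriv X s / X s) atTop
      (nhds (((B : ℂ) + Complex.I * (A : ℂ)) / (Real.sqrt (A ^ 2 + B ^ 2) : ℂ))) ∧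
    Tendsto (fun s => (‖X s‖ : ℂ) * deriv X s / X s) atBot
      (nhds (-(((B : ℂ) + Complex.I * (A : ℂ)) / (Real.sqrt (A ^ 2 + B ^ 2) : ℂ)))) := by
  constructor
  · exact master A B hA hB x y hx hy θ hθ X hX
  · -- time reversal: (x,y,θ,X) ↦ (-x(-·), -y(-·), θ(-·), -X(-·)) solves the same system
    have hxt : ∀ s, HasDerivAt (fun u => -x (-u))
        ((fun u => -x (-u)) s * (fun u => -y (-u)) s + A) s := by
      intro s
      have h2 := ((hx (-s)).comp s (hasDerivAt_neg s)).neg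
      simp only [Function.comp_def] at h2
      refine h2.congr_deriv ?_
      ring
    have hyt : ∀ s, HasDerivAt (fun u => -y (-u)) (-((fun u => -x (-u)) s) ^ 2 - B) s := by
      intro s
      have h2 := ((hy (-s)).comp s (hasDerivAt_neg s)).neg
      simp only [Function.comp_def] at h2
      refine h2.congr_deriv ?_
      ring
    have hθt : ∀ s, (fun u => θ (-u)) s = ∫ t in (0:ℝ)..s, (fun u => -x (-u)) t := by
      intro s
      simp only
      have h1 : (∫ t in (0:ℝ)..s, -x (-t)) = -∫ t in (0:ℝ)..s, x (-t) :=
        intervalIntegral.integral_neg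
      have h2 : (∫ t in (0:ℝ)..s, x (-t)) = ∫ t in (-s)..(0:ℝ), x t := by
        simpa using intervalIntegral.integral_comp_neg (a := 0) (b := s) (f := x)
      rw [hθ (-s), h1, h2, intervalIntegral.integral_symm]
    have hXt : ∀ s, (fun u => -X (-u)) s = Complex.exp (Complex.I * (((fun u => θ (-u)) s : ℝ) : ℂ)) *
        ((((fun u => -x (-u)) s : ℝ) : ℂ) + Complex.I * (((fun u => -y (-u)) s : ℝ) : ℂ)) /
        ((A : ℂ) - Complex.I * (B : ℂ)) := by
      intro s
      simp only
      rw [hX (-s)]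
      push_cast
      ring
    have key := master A B hA hB (fun u => -x (-u)) (fun u => -y (-u)) hxt hyt
      (fun u => θ (-u)) hθt (fun u => -X (-u)) hXt
    have hXd := lemD A B hA x y hx hy θ hθ X hX
    have hkey2 : ∀ s : ℝ, (‖(fun u => -X (-u)) s‖ : ℂ) * deriv (fun u => -X (-u)) s /
        ((fun u => -X (-u)) s) = -((‖X (-s)‖ : ℂ) * deriv X (-s) / X (-s)) := by
      intro s
      have h2' : HasDerivAt (fun u => -X (-u)) (Complex.exp (Complex.I * ((θ (-s) : ℝ) : ℂ))) s := by
        have h2 := ((hXd (-s)).scomp s (hasDerivAt_neg s)).neg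
        simp only [Function.comp_def, neg_smul, one_smul, neg_neg] at h2
        exact h2
      have hdt : deriv (fun u => -X (-u)) s = Complex.exp (Complex.I * ((θ (-s) : ℝ) : ℂ)) :=
        h2'.deriv
      have hdX : deriv X (-s) = Complex.exp (Complex.I * ((θ (-s) : ℝ) : ℂ)) := (hXd (-s)).deriv
      simp only [hdt, hdX, norm_neg]
      rw [div_neg]
    have key2 := key.congr hkey2
    have key3 := key2.neg
    simp only [neg_neg] at key3
    have key4 := key3.comp tendsto_neg_atBot_atTop
    refine key4.congr ?_
    intro s
    simp [Function.comp_def]
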